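/- arXiv:2112.12201 — 3 statements merged into one kernel-verified Lean document; each statement's English description precedes it below -/
import Mathlib

section
/- Let X be a natural-number-valued random variable with finite mean, μ > 0, and suppose D(t,μ) = Ψ_X'(t) − μΨ_X(t) does not change sign on [0,1] (either D(t,μ) ≥ 0 for all t ∈ [0,1] or D(t,μ) ≤ 0 for all t ∈ [0,1]). Then |e^{−μ} − P(X=0)| ≤ ∫_0^1 |D(t,μ)| dt ≤ e^{μ} |e^{−μ} − P(X=0)|. -/
open Real

open MeasureTheory intervalIntegral Set in
private lemma D_aux_lemma (μ : ℝ) (hμ : 0 ≤ μ) (f : ℝ → ℝ) (hf : ContinuousOn f (Icc 0 1))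
    (hpos : ∀ t ∈ Ioo (0:ℝ) 1, 0 ≤ f t) (c : ℝ)
    (hc : ∫ t in (0:ℝ)..1, f t * Real.exp (-μ*t) = c) :
    |c| ≤ (∫ t in (0:ℝ)..1, f t) ∧ (∫ t in (0:ℝ)..1, f t) ≤ Real.exp μ * |c| := by
  have haeIoo : ∀ᵐ t ∂(volume.restrict (Icc (0:ℝ) 1)), t ∈ Ioo (0:ℝ) 1 := by
    have h0 : ∀ᵐ t : ℝ ∂volume, t ≠ (0:ℝ) := by
      simpa [MeasureTheory.ae_iff] using (measure_singleton (0:ℝ) (μ := volume))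
    have h1 : ∀ᵐ t : ℝ ∂volume, t ≠ (1:ℝ) := by
      simpa [MeasureTheory.ae_iff] using (measure_singleton (1:ℝ) (μ := volume))
    filter_upwards [ae_restrict_mem measurableSet_Icc, ae_restrict_of_ae h0,
      ae_restrict_of_ae h1] with t ht ht0 ht1
    exact ⟨lt_of_le_of_ne ht.1 (Ne.symm ht0), lt_of_le_of_ne ht.2 ht1⟩
  have hintf : IntervalIntegrable f volume 0 1 :=
    ContinuousOn.intervalIntegrable (by rwa [uIcc_of_le zero_le_one])
  have hfe : ContinuousOn (fun t => f t * Real.exp (-μ*t)) (Icc 0 1) :=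
    hf.mul (Continuous.continuousOn (by continuity))
  have hintfe : IntervalIntegrable (fun t => f t * Real.exp (-μ*t)) volume 0 1 :=
    ContinuousOn.intervalIntegrable (show ContinuousOn _ (uIcc (0:ℝ) 1) by
      rw [uIcc_of_le zero_le_one]; exact hfe)
  have hB0 : 0 ≤ c := hc ▸ integral_nonneg_of_ae_restrict zero_le_one
    (by filter_upwards [haeIoo] with t ht; exact mul_nonneg (hpos t ht) (Real.exp_pos _).le)
  have hBA : c ≤ ∫ t in (0:ℝ)..1, f t := by
    rw [← hc]
    refine integral_mono_ae_restrict zero_le_one hintfe hintf ?_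
    filter_upwards [haeIoo] with t ht
    have : Real.exp (-μ*t) ≤ 1 := Real.exp_le_one_iff.mpr (by nlinarith [ht.1.le, ht.2.le, hμ])
    exact mul_le_of_le_one_right (hpos t ht) this
  have hAB : (∫ t in (0:ℝ)..1, f t) ≤ Real.exp μ * c := by
    rw [← hc, ← intervalIntegral.integral_const_mul]
    refine integral_mono_ae_restrict zero_le_one hintf (hintfe.const_mul _) ?_
    filter_upwards [haeIoo] with t ht
    have h1 : 1 ≤ Real.exp μ * Real.exp (-μ*t) := by
      rw [← Real.exp_add]
      exact Real.one_le_exp (by nlinarith [ht.1.le, ht.2.le, hμ])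
    nlinarith [hpos t ht]
  rw [abs_of_nonneg hB0]
  exact ⟨hBA, hAB⟩

/-- If `D(t,μ)` does not change sign on `[0,1]`, then
`|e^{-μ} - P(X=0)| ≤ ∫_0^1 |D(t,μ)| dt ≤ e^μ |e^{-μ} - P(X=0)|`. -/
theorem D_abs_integral_bounds (p : ℕ → ℝ) (hp : ∀ j, 0 ≤ p j)
    (hsum : ∑' j, p j = 1) (hmean : Summable (fun j : ℕ => (j : ℝ) * p j))
    (μ : ℝ) (hμ : 0 < μ)
    (D : ℝ → ℝ)
    (hD : D = fun t => deriv (fun s : ℝ => ∑' j : ℕ, p j * s ^ j) t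
      - μ * ∑' j : ℕ, p j * t ^ j)
    (hsign : (∀ t ∈ Set.Icc (0 : ℝ) 1, 0 ≤ D t) ∨ (∀ t ∈ Set.Icc (0 : ℝ) 1, D t ≤ 0)) :
    |Real.exp (-μ) - p 0| ≤ ∫ t in (0 : ℝ)..1, |D t| ∧
      ∫ t in (0 : ℝ)..1, |D t| ≤ Real.exp μ * |Real.exp (-μ) - p 0| := by
  open MeasureTheory intervalIntegral Set in
  set Ψ : ℝ → ℝ := fun t => ∑' j : ℕ, p j * t ^ j with hΨdef
  set g : ℝ → ℝ := fun t => ∑' j : ℕ, p j * ((j : ℝ) * t ^ (j - 1)) with hgdef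
  have hpsum : Summable p := by
    by_contra h
    rw [tsum_eq_zero_of_not_summable h] at hsum
    norm_num at hsum
  -- derivative of Ψ on (-1,1)
  have hΨderiv : ∀ y ∈ Set.Ioo (-1:ℝ) 1, HasDerivAt Ψ (g y) y := by
    intro y hy
    refine hasDerivAt_tsum_of_isPreconnected hmean isOpen_Ioo isPreconnected_Ioo
      (g := fun j t => p j * t ^ j) (g' := fun j t => p j * ((j:ℝ) * t ^ (j-1)))
      (fun n z _ => (hasDerivAt_pow n z).const_mul (p n)) ?_
      (show (0:ℝ) ∈ Set.Ioo (-1:ℝ) 1 by norm_num) ?_ hy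
    · intro n z hz
      have hz1 : |z| ≤ 1 := (abs_lt.mpr ⟨hz.1, hz.2⟩).le
      calc ‖p n * ((n:ℝ) * z ^ (n-1))‖ = p n * ((n:ℝ) * |z| ^ (n-1)) := by
            simp [abs_mul, abs_pow, abs_of_nonneg (hp n)]
        _ ≤ p n * ((n:ℝ) * 1) :=
            mul_le_mul_of_nonneg_left (mul_le_mul_of_nonneg_left
              (pow_le_one₀ (abs_nonneg z) hz1) (Nat.cast_nonneg n)) (hp n)
        _ = (n:ℝ) * p n := by ring
    · refine Summable.of_norm_bounded hpsum fun n => ?_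
      simp only [norm_mul, norm_pow, Real.norm_eq_abs]
      calc |p n| * |(0:ℝ)| ^ n ≤ p n * 1 := by
            rw [abs_of_nonneg (hp n)]
            exact mul_le_mul_of_nonneg_left
              (pow_le_one₀ (abs_nonneg (0:ℝ)) (by norm_num)) (hp n)
        _ = p n := mul_one _
  -- continuity
  have hΨcont : ContinuousOn Ψ (Set.Icc (0:ℝ) 1) := by
    refine continuousOn_tsum
      (fun i => (by fun_prop : Continuous fun t : ℝ => p i * t ^ i).continuousOn)
      hpsum fun n x hx => ?_
    have hx1 : |x| ≤ 1 := abs_le.mpr ⟨by linarith [hx.1], hx.2⟩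
    calc ‖p n * x ^ n‖ = p n * |x| ^ n := by simp [abs_mul, abs_pow, abs_of_nonneg (hp n)]
      _ ≤ p n * 1 := mul_le_mul_of_nonneg_left (pow_le_one₀ (abs_nonneg x) hx1) (hp n)
      _ = p n := mul_one _
  have hgcont : ContinuousOn g (Set.Icc (0:ℝ) 1) := by
    refine continuousOn_tsum
      (fun i => (by fun_prop : Continuous fun t : ℝ => p i * ((i:ℝ) * t ^ (i-1))).continuousOn)
      hmean fun n x hx => ?_
    have hx1 : |x| ≤ 1 := abs_le.mpr ⟨by linarith [hx.1], hx.2⟩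
    calc ‖p n * ((n:ℝ) * x ^ (n-1))‖ = p n * ((n:ℝ) * |x| ^ (n-1)) := by
          simp [abs_mul, abs_pow, abs_of_nonneg (hp n)]
      _ ≤ p n * ((n:ℝ) * 1) :=
            mul_le_mul_of_nonneg_left (mul_le_mul_of_nonneg_left
              (pow_le_one₀ (abs_nonneg x) hx1) (Nat.cast_nonneg n)) (hp n)
      _ = (n:ℝ) * p n := by ring
  -- values at endpoints
  have hΨ1 : Ψ 1 = 1 := by simp [hΨdef, hsum]
  have hΨ0 : Ψ 0 = p 0 := by
    show (∑' j : ℕ, p j * (0:ℝ) ^ j) = p 0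
    rw [tsum_eq_single 0 (fun j hj => by simp [zero_pow hj])]
    simp
  -- FTC identity
  have key : ∫ t in (0:ℝ)..1, (g t - μ * Ψ t) * Real.exp (-μ*t)
      = Real.exp (-μ) - p 0 := by
    have hFcont : ContinuousOn (fun t => Ψ t * Real.exp (-μ*t)) (Set.Icc (0:ℝ) 1) :=
      hΨcont.mul (Continuous.continuousOn (by fun_prop))
    have hFderiv : ∀ x ∈ Set.Ioo (0:ℝ) 1, HasDerivWithinAt (fun t => Ψ t * Real.exp (-μ*t))
        ((g x - μ * Ψ x) * Real.exp (-μ*x)) (Set.Ioi x) x := by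
      intro x hx
      have h1 : HasDerivAt (fun t : ℝ => Real.exp (-μ*t)) (Real.exp (-μ*x) * (-μ)) x := by
        simpa using ((hasDerivAt_id x).const_mul (-μ)).exp
      have h2 := (hΨderiv x ⟨by linarith [hx.1], hx.2⟩).mul h1
      have h3 : g x * Real.exp (-μ*x) + Ψ x * (Real.exp (-μ*x) * (-μ))
          = (g x - μ * Ψ x) * Real.exp (-μ*x) := by ring
      exact (h3 ▸ h2).hasDerivWithinAt
    have hint : IntervalIntegrable (fun t => (g t - μ * Ψ t) * Real.exp (-μ*t)) volume 0 1 := by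
      apply ContinuousOn.intervalIntegrable
      rw [Set.uIcc_of_le zero_le_one]
      exact ((hgcont.sub (hΨcont.const_smul μ)).mul (Continuous.continuousOn (by fun_prop)))
    have h := integral_eq_sub_of_hasDeriv_right_of_le zero_le_one hFcont hFderiv hint
    rw [h, hΨ1, hΨ0]
    norm_num
  -- D agrees with g - μΨ on the open interval
  have hDeq : ∀ t ∈ Set.Ioo (0:ℝ) 1, D t = g t - μ * Ψ t := by
    intro t ht
    rw [hD]
    simp only
    rw [(hΨderiv t ⟨by linarith [ht.1], ht.2⟩).deriv]
  have hne1 : ∀ᵐ t : ℝ ∂volume, t ≠ (1:ℝ) := by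
    simpa [MeasureTheory.ae_iff] using (measure_singleton (1:ℝ) (μ := volume))
  have hIooOfIoc : ∀ t : ℝ, t ∈ Set.uIoc (0:ℝ) 1 → t ≠ 1 → t ∈ Set.Ioo (0:ℝ) 1 := by
    intro t ht h1
    rw [Set.uIoc_of_le zero_le_one] at ht
    exact ⟨ht.1, lt_of_le_of_ne ht.2 h1⟩
  rcases hsign with hs | hs
  · -- nonnegative case
    have habs : (∫ t in (0:ℝ)..1, |D t|) = ∫ t in (0:ℝ)..1, (g t - μ * Ψ t) := by
      apply intervalIntegral.integral_congr_ae
      filter_upwards [hne1] with t ht1 htI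
      have htIoo := hIooOfIoc t htI ht1
      rw [← hDeq t htIoo,
        abs_of_nonneg (hs t ⟨htIoo.1.le, htIoo.2.le⟩)]
    have hpos : ∀ t ∈ Set.Ioo (0:ℝ) 1, 0 ≤ g t - μ * Ψ t := fun t ht =>
      hDeq t ht ▸ hs t ⟨ht.1.le, ht.2.le⟩
    have := D_aux_lemma μ hμ.le (fun t => g t - μ * Ψ t)
      (hgcont.sub (hΨcont.const_smul μ)) hpos (Real.exp (-μ) - p 0) key
    rw [habs]
    exact this
  · -- nonpositive case
    have key' : ∫ t in (0:ℝ)..1, (μ * Ψ t - g t) * Real.exp (-μ*t)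
        = p 0 - Real.exp (-μ) := by
      have : (fun t => (μ * Ψ t - g t) * Real.exp (-μ*t))
          = fun t => -((g t - μ * Ψ t) * Real.exp (-μ*t)) := by funext t; ring
      rw [this, intervalIntegral.integral_neg, key]; ring
    have habs : (∫ t in (0:ℝ)..1, |D t|) = ∫ t in (0:ℝ)..1, (μ * Ψ t - g t) := by
      apply intervalIntegral.integral_congr_ae
      filter_upwards [hne1] with t ht1 htI
      have htIoo := hIooOfIoc t htI ht1
      have := hDeq t htIoo
      rw [abs_of_nonpos (hs t ⟨htIoo.1.le, htIoo.2.le⟩), this]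
      ring
    have hpos : ∀ t ∈ Set.Ioo (0:ℝ) 1, 0 ≤ μ * Ψ t - g t := by
      intro t ht
      have := hs t ⟨ht.1.le, ht.2.le⟩
      rw [hDeq t ht] at this
      linarith
    have haux := D_aux_lemma μ hμ.le (fun t => μ * Ψ t - g t)
      ((hΨcont.const_smul μ).sub hgcont) hpos (p 0 - Real.exp (-μ)) key'
    rw [habs, abs_sub_comm (Real.exp (-μ)) (p 0)]
    exact haux
end

section
/- Let f_k(μ) = e^{−μ}(1 + μ + … + μ^k/k!) and T^{(k)} = f_k(μ) − P(X=0)(1 + μ + … + μ^k/k!). If D(t,μ) = Ψ_X'(t) − μΨ_X(t) does not change sign on [0,1], then (1 + μ + … + μ^k/k!)^{−1} |T^{(k)}| ≤ ∫_0^1 |D(t,μ)| dt ≤ e^{μ} |T^{(k)}| for every natural number k. -/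
open Real Finset

/-- Bounds of Proposition 1: for every `k`,
`(∑_{j≤k} μ^j/j!)⁻¹ |T⁽ᵏ⁾| ≤ ∫_0^1 |D(t,μ)| dt ≤ e^μ |T⁽ᵏ⁾|`. -/
theorem T_k_integral_bounds (p : ℕ → ℝ) (hp : ∀ j, 0 ≤ p j)
    (hsum : ∑' j, p j = 1) (hmean : Summable (fun j : ℕ => (j : ℝ) * p j))
    (μ : ℝ) (hμ : 0 < μ)
    (D : ℝ → ℝ)
    (hD : D = fun t => deriv (fun s : ℝ => ∑' j : ℕ, p j * s ^ j) t
      - μ * ∑' j : ℕ, p j * t ^ j)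
    (hsign : (∀ t ∈ Set.Icc (0 : ℝ) 1, 0 ≤ D t) ∨ (∀ t ∈ Set.Icc (0 : ℝ) 1, D t ≤ 0))
    (k : ℕ)
    (T : ℝ)
    (hT : T = Real.exp (-μ) * (∑ j ∈ Finset.range (k + 1), μ ^ j / (Nat.factorial j))
      - p 0 * ∑ j ∈ Finset.range (k + 1), μ ^ j / (Nat.factorial j)) :
    (∑ j ∈ Finset.range (k + 1), μ ^ j / (Nat.factorial j))⁻¹ * |T|
        ≤ ∫ t in (0 : ℝ)..1, |D t| ∧
      ∫ t in (0 : ℝ)..1, |D t| ≤ Real.exp μ * |T| := by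
  classical
  set S := ∑ j ∈ Finset.range (k + 1), μ ^ j / (Nat.factorial j) with hSdef
  -- S ≥ 1
  have hS1 : (1 : ℝ) ≤ S := by
    have h0 : (0 : ℕ) ∈ Finset.range (k + 1) := by simp
    have := Finset.single_le_sum (f := fun j : ℕ => μ ^ j / (Nat.factorial j))
      (fun i _ => by positivity) h0
    simpa using this
  have hSpos : (0 : ℝ) < S := lt_of_lt_of_le one_pos hS1
  -- summability of p
  have hp' : Summable p := by
    by_contra h
    rw [tsum_eq_zero_of_not_summable h] at hsum
    norm_num at hsum
  have hmean' : Summable (fun j : ℕ => p j * (j : ℝ)) := by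
    simpa [mul_comm] using hmean
  set Ψ : ℝ → ℝ := fun s : ℝ => ∑' j : ℕ, p j * s ^ j with hΨdef
  set g1 : ℝ → ℝ := fun t : ℝ => ∑' j : ℕ, p j * ((j : ℝ) * t ^ (j - 1)) with hg1def
  -- continuity of Ψ on [0,1]
  have habs : ∀ (j : ℕ) (x : ℝ), x ∈ Set.Icc (0:ℝ) 1 → ‖p j * x ^ j‖ ≤ p j := by
    intro j x hx
    rw [Real.norm_eq_abs, abs_mul, abs_of_nonneg (hp j), abs_pow]
    have h1 : |x| ≤ 1 := abs_le.2 ⟨by linarith [hx.1], hx.2⟩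
    have : |x| ^ j ≤ 1 := pow_le_one₀ (abs_nonneg x) h1
    calc p j * |x| ^ j ≤ p j * 1 := mul_le_mul_of_nonneg_left this (hp j)
      _ = p j := mul_one _
  have hΨcont : ContinuousOn Ψ (Set.Icc (0:ℝ) 1) :=
    continuousOn_tsum (fun j => (continuous_const.mul (continuous_pow j)).continuousOn)
      hp' habs
  have habs' : ∀ (j : ℕ) (x : ℝ), |x| ≤ 1 →
      ‖p j * ((j : ℝ) * x ^ (j - 1))‖ ≤ p j * (j : ℝ) := by
    intro j x hx
    rw [Real.norm_eq_abs, abs_mul, abs_of_nonneg (hp j), abs_mul, abs_pow, Nat.abs_cast]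
    have : |x| ^ (j - 1) ≤ 1 := pow_le_one₀ (abs_nonneg x) hx
    calc p j * ((j : ℝ) * |x| ^ (j - 1)) ≤ p j * ((j : ℝ) * 1) :=
          mul_le_mul_of_nonneg_left
            (mul_le_mul_of_nonneg_left this (by positivity)) (hp j)
      _ = p j * (j : ℝ) := by ring
  have hg1cont : ContinuousOn g1 (Set.Icc (0:ℝ) 1) :=
    continuousOn_tsum
      (fun j => (continuous_const.mul (continuous_const.mul (continuous_pow (j-1)))).continuousOn)
      hmean' (fun j x hx => habs' j x (abs_le.2 ⟨by linarith [hx.1], hx.2⟩))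
  -- derivative of Ψ on (-1,1)
  have hderiv : ∀ t ∈ Set.Ioo (-1:ℝ) 1, HasDerivAt Ψ (g1 t) t := by
    intro t ht
    have h0 : (0:ℝ) ∈ Set.Ioo (-1:ℝ) 1 := by norm_num
    refine hasDerivAt_tsum_of_isPreconnected
      (g := fun (n : ℕ) (y : ℝ) => p n * y ^ n)
      (g' := fun (n : ℕ) (y : ℝ) => p n * ((n : ℝ) * y ^ (n - 1)))
      hmean' isOpen_Ioo
      (isPreconnected_Ioo) (fun n y _ => ?_) (fun n y hy => ?_) h0 ?_ ht
    · simpa [mul_comm, mul_assoc] using (hasDerivAt_pow n y).const_mul (p n)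
    · exact habs' n y (abs_le.2 ⟨le_of_lt hy.1, le_of_lt hy.2⟩)
    · refine Summable.of_nonneg_of_le (fun j => ?_) (fun j => ?_) hp'
      · exact mul_nonneg (hp j) (pow_nonneg le_rfl _)
      · have : (0:ℝ) ^ j ≤ 1 := pow_le_one₀ le_rfl zero_le_one
        calc p j * (0:ℝ) ^ j ≤ p j * 1 := mul_le_mul_of_nonneg_left this (hp j)
          _ = p j := mul_one _
  set g : ℝ → ℝ := fun t => g1 t - μ * Ψ t with hgdef
  have hgD : ∀ t ∈ Set.Ioo (0:ℝ) 1, D t = g t := by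
    intro t ht
    have ht' : t ∈ Set.Ioo (-1:ℝ) 1 := ⟨by linarith [ht.1], ht.2⟩
    have := (hderiv t ht').deriv
    rw [hD]
    simp only [hgdef]
    rw [← this]
  have hgcont : ContinuousOn g (Set.Icc (0:ℝ) 1) :=
    hg1cont.sub (continuousOn_const.mul hΨcont)
  -- FTC for F = Ψ t * exp(-μ t)
  set F : ℝ → ℝ := fun t => Ψ t * Real.exp (-μ * t) with hFdef
  have hFcont : ContinuousOn F (Set.Icc (0:ℝ) 1) :=
    hΨcont.mul ((Real.continuous_exp.comp (continuous_const.mul continuous_id)).continuousOn)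
  have hFderiv : ∀ t ∈ Set.Ioo (0:ℝ) 1,
      HasDerivAt F (g t * Real.exp (-μ * t)) t := by
    intro t ht
    have ht' : t ∈ Set.Ioo (-1:ℝ) 1 := ⟨by linarith [ht.1], ht.2⟩
    have he : HasDerivAt (fun t : ℝ => Real.exp (-μ * t)) (Real.exp (-μ * t) * -μ) t := by
      simpa using ((hasDerivAt_id t).const_mul (-μ)).exp
    have := (hderiv t ht').fun_mul he
    refine this.congr_deriv ?_
    simp only [hgdef]
    ring
  have hInt : IntervalIntegrable (fun t => g t * Real.exp (-μ * t)) MeasureTheory.volume 0 1 := by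
    apply ContinuousOn.intervalIntegrable
    rw [Set.uIcc_of_le (by norm_num : (0:ℝ) ≤ 1)]
    exact hgcont.mul ((Real.continuous_exp.comp (continuous_const.mul continuous_id)).continuousOn)
  have hΨ1 : Ψ 1 = 1 := by simp only [hΨdef, one_pow, mul_one]; exact hsum
  have hΨ0 : Ψ 0 = p 0 := by
    have : ∑' j : ℕ, p j * (0:ℝ) ^ j = p 0 * (0:ℝ) ^ 0 := by
      refine tsum_eq_single 0 (fun b hb => ?_)
      simp [zero_pow hb]
    simpa using this
  have hI : ∫ t in (0:ℝ)..1, g t * Real.exp (-μ * t) = Real.exp (-μ) - p 0 := by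
    rw [intervalIntegral.integral_eq_sub_of_hasDeriv_right_of_le (by norm_num)
      hFcont (fun x hx => (hFderiv x hx).hasDerivWithinAt) hInt]
    simp [hFdef, hΨ1, hΨ0]
  -- a.e. tools
  have hae1 : ∀ᵐ (x : ℝ), x ≠ 1 := by
    have h : (MeasureTheory.volume : MeasureTheory.Measure ℝ) {(1:ℝ)} = 0 := MeasureTheory.measure_singleton 1
    filter_upwards [MeasureTheory.compl_mem_ae_iff.2 h] with x hx
    simpa using hx
  have hmemIoo : ∀ x : ℝ, x ∈ Set.uIoc (0:ℝ) 1 → x ≠ 1 → x ∈ Set.Ioo (0:ℝ) 1 := by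
    intro x hx hx1
    rw [Set.uIoc_of_le (by norm_num : (0:ℝ) ≤ 1)] at hx
    exact ⟨hx.1, lt_of_le_of_ne hx.2 hx1⟩
  -- |D| = |g| a.e. on the interval
  have hDg : (∫ t in (0:ℝ)..1, |D t|) = ∫ t in (0:ℝ)..1, |g t| := by
    apply intervalIntegral.integral_congr_ae
    filter_upwards [hae1] with x hx1 hx
    rw [hgD x (hmemIoo x hx hx1)]
  -- key identity: ∫ |g| e^{-μt} = |e^{-μ} - p 0|
  have hkey : (∫ t in (0:ℝ)..1, |g t| * Real.exp (-μ * t)) = |Real.exp (-μ) - p 0| := by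
    rcases hsign with hpos | hneg
    · have hcongr : (∫ t in (0:ℝ)..1, |g t| * Real.exp (-μ * t))
          = ∫ t in (0:ℝ)..1, g t * Real.exp (-μ * t) := by
        apply intervalIntegral.integral_congr_ae
        filter_upwards [hae1] with x hx1 hx
        have hxm := hmemIoo x hx hx1
        have : 0 ≤ g x := by rw [← hgD x hxm]; exact hpos x ⟨le_of_lt hxm.1, le_of_lt hxm.2⟩
        rw [abs_of_nonneg this]
      have hnn : 0 ≤ ∫ t in (0:ℝ)..1, |g t| * Real.exp (-μ * t) :=
        intervalIntegral.integral_nonneg (by norm_num)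
          (fun u _ => mul_nonneg (abs_nonneg _) (Real.exp_nonneg _))
      rw [hcongr, hI] at hnn ⊢
      rw [abs_of_nonneg hnn]
    · have hcongr : (∫ t in (0:ℝ)..1, |g t| * Real.exp (-μ * t))
          = ∫ t in (0:ℝ)..1, -(g t * Real.exp (-μ * t)) := by
        apply intervalIntegral.integral_congr_ae
        filter_upwards [hae1] with x hx1 hx
        have hxm := hmemIoo x hx hx1
        have : g x ≤ 0 := by rw [← hgD x hxm]; exact hneg x ⟨le_of_lt hxm.1, le_of_lt hxm.2⟩
        rw [abs_of_nonpos this]; ring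
      have hnn : 0 ≤ ∫ t in (0:ℝ)..1, |g t| * Real.exp (-μ * t) :=
        intervalIntegral.integral_nonneg (by norm_num)
          (fun u _ => mul_nonneg (abs_nonneg _) (Real.exp_nonneg _))
      rw [hcongr, intervalIntegral.integral_neg, hI] at hnn ⊢
      rw [abs_of_nonpos (by linarith)]
  -- integrability of |g| and |g| e^{-μt}
  have hgabsint : IntervalIntegrable (fun t => |g t|) MeasureTheory.volume 0 1 := by
    apply ContinuousOn.intervalIntegrable
    rw [Set.uIcc_of_le (by norm_num : (0:ℝ) ≤ 1)]
    exact hgcont.abs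
  have hgeint : IntervalIntegrable (fun t => |g t| * Real.exp (-μ * t))
      MeasureTheory.volume 0 1 := by
    apply ContinuousOn.intervalIntegrable
    rw [Set.uIcc_of_le (by norm_num : (0:ℝ) ≤ 1)]
    exact hgcont.abs.mul
      ((Real.continuous_exp.comp (continuous_const.mul continuous_id)).continuousOn)
  have hgeint' : IntervalIntegrable (fun t => Real.exp (-μ) * |g t|)
      MeasureTheory.volume 0 1 := (hgabsint.const_mul _)
  set A := ∫ t in (0:ℝ)..1, |g t| with hAdef
  -- lower: |e^{-μ}-p0| ≤ A
  have hlow : |Real.exp (-μ) - p 0| ≤ A := by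
    rw [← hkey]
    apply intervalIntegral.integral_mono_on (by norm_num) hgeint hgabsint
    intro x hx
    have : Real.exp (-μ * x) ≤ 1 := Real.exp_le_one_iff.2 (by nlinarith [hx.1])
    calc |g x| * Real.exp (-μ * x) ≤ |g x| * 1 :=
          mul_le_mul_of_nonneg_left this (abs_nonneg _)
      _ = |g x| := mul_one _
  -- upper: e^{-μ} A ≤ |e^{-μ}-p0|
  have hup : Real.exp (-μ) * A ≤ |Real.exp (-μ) - p 0| := by
    rw [← hkey, hAdef, ← intervalIntegral.integral_const_mul]
    apply intervalIntegral.integral_mono_on (by norm_num) hgeint' hgeint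
    intro x hx
    have hle : Real.exp (-μ) ≤ Real.exp (-μ * x) := by
      apply Real.exp_le_exp.2
      nlinarith [hx.2]
    calc Real.exp (-μ) * |g x| ≤ Real.exp (-μ * x) * |g x| :=
          mul_le_mul_of_nonneg_right hle (abs_nonneg _)
      _ = |g x| * Real.exp (-μ * x) := mul_comm _ _
  -- |T| = S * |e^{-μ} - p 0|
  have hTabs : |T| = S * |Real.exp (-μ) - p 0| := by
    have : T = (Real.exp (-μ) - p 0) * S := by rw [hT]; ring
    rw [this, abs_mul, abs_of_pos hSpos, mul_comm]
  constructor
  · rw [hDg, hTabs]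
    rw [inv_mul_eq_div, mul_comm, mul_div_assoc, div_self (ne_of_gt hSpos), mul_one]
    exact hlow
  · rw [hDg, hTabs]
    have h1 : A ≤ Real.exp μ * |Real.exp (-μ) - p 0| := by
      have := mul_le_mul_of_nonneg_left hup (Real.exp_nonneg μ)
      rwa [← mul_assoc, ← Real.exp_add, add_neg_cancel, Real.exp_zero, one_mul] at this
    calc A ≤ Real.exp μ * |Real.exp (-μ) - p 0| := h1
      _ ≤ Real.exp μ * (S * |Real.exp (-μ) - p 0|) := by
          rw [← mul_assoc, mul_comm (Real.exp μ) S, mul_assoc]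
          nlinarith [Real.exp_pos μ, abs_nonneg (Real.exp (-μ) - p 0)]
end

section
/- For any μ > 0 and natural number k, f_k(μ)(1 − f_k(μ)) − e^{−2μ} μ^{2k+1}/(k!)² ≥ 0, i.e. e^{−2μ} μ^{2k+1}/(k!)² ≤ f_k(μ)(1 − f_k(μ)), where f_k(μ) = e^{−μ}Σ_{j=0}^{k} μ^j/j!. -/
open Real Finset Filter

theorem sigma_sq_nonneg (μ : ℝ) (hμ : 0 < μ) (k : ℕ) :
    Real.exp (-2 * μ) * μ ^ (2 * k + 1) / ((Nat.factorial k : ℝ)) ^ 2 ≤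
      (Real.exp (-μ) * ∑ j ∈ Finset.range (k + 1), μ ^ j / (Nat.factorial j)) *
        (1 - Real.exp (-μ) * ∑ j ∈ Finset.range (k + 1), μ ^ j / (Nat.factorial j)) := by
  set t : ℕ → ℝ := fun j => μ ^ j / (Nat.factorial j : ℝ) with ht_def
  have ht_nonneg : ∀ j, 0 ≤ t j := fun j => by positivity
  have ht_hasSum : HasSum t (Real.exp μ) := by
    rw [Real.exp_eq_exp_ℝ]; exact NormedSpace.expSeries_div_hasSum_exp μ
  have hrec : ∀ N : ℕ, ((N : ℝ) + 1) * t (N + 1) = μ * t N := by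
    intro N
    have h1 : (Nat.factorial N : ℝ) ≠ 0 := Nat.cast_ne_zero.2 (Nat.factorial_ne_zero N)
    have h2 : (Nat.factorial (N+1) : ℝ) = ((N:ℝ)+1) * Nat.factorial N := by
      push_cast [Nat.factorial_succ]; ring
    simp only [ht_def, h2]
    field_simp
    ring
  -- telescoping identity
  have hL1 : ∀ N : ℕ, ∑ j ∈ range (N + 1), ((j : ℝ) - μ) * t j = -μ * t N := by
    intro N
    induction N with
    | zero => simp [ht_def]
    | succ n ih =>
        rw [Finset.sum_range_succ, ih]
        push_cast
        linear_combination hrec n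
  -- HasSum of j * t j
  have h5 : HasSum (fun j : ℕ => (j : ℝ) * t j) (μ * Real.exp μ) := by
    have heq : (fun j : ℕ => μ * t j) = fun j : ℕ => ((j : ℝ) + 1) * t (j + 1) :=
      funext fun j => (hrec j).symm
    have h : HasSum (fun j : ℕ => ((j + 1 : ℕ) : ℝ) * t (j + 1)) (μ * Real.exp μ) := by
      have h0 := ht_hasSum.mul_left μ
      rw [heq] at h0
      refine h0.congr_fun fun j => by push_cast; ring
    have := (hasSum_nat_add_iff (f := fun j : ℕ => (j : ℝ) * t j) 1).mp h
    simpa using this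
  -- HasSum of j^2 * t j
  have h6 : HasSum (fun j : ℕ => (j : ℝ)^2 * t j) (μ^2 * Real.exp μ + μ * Real.exp μ) := by
    have base : HasSum (fun j : ℕ => μ * ((j:ℝ) * t j) + μ * t j)
        (μ * (μ * Real.exp μ) + μ * Real.exp μ) := (h5.mul_left μ).add (ht_hasSum.mul_left μ)
    have h : HasSum (fun j : ℕ => ((j + 1 : ℕ) : ℝ)^2 * t (j + 1))
        (μ * (μ * Real.exp μ) + μ * Real.exp μ) := by
      refine base.congr_fun fun j => ?_
      push_cast
      linear_combination ((j:ℝ) + 1) * hrec j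
    have := (hasSum_nat_add_iff (f := fun j : ℕ => (j : ℝ)^2 * t j) 1).mp h
    simp only [Finset.range_one, Finset.sum_singleton, Nat.cast_zero] at this
    convert this using 1
    rfl
    ring
  -- HasSum of (j - μ)^2 * t j = μ e^μ
  have hU : HasSum (fun j : ℕ => ((j : ℝ) - μ)^2 * t j) (μ * Real.exp μ) := by
    have base := (h6.add (ht_hasSum.mul_left (μ^2))).sub (h5.mul_left (2*μ))
    have heq : (fun j : ℕ => ((j:ℝ)^2 * t j + μ^2 * t j) - 2*μ*((j:ℝ) * t j))
        = fun j : ℕ => ((j : ℝ) - μ)^2 * t j := funext fun j => by ring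
    rw [heq] at base
    convert base using 1
    rfl
    ring
  -- notation
  set E := Real.exp μ with hE_def
  set A : ℝ := ∑ j ∈ range (k + 1), t j with hA_def
  set V : ℝ := ∑ j ∈ range (k + 1), ((j : ℝ) - μ)^2 * t j with hV_def
  have hA_le : A ≤ E := sum_le_hasSum _ (fun j _ => ht_nonneg j) ht_hasSum
  have hu_nonneg : ∀ j : ℕ, 0 ≤ ((j : ℝ) - μ)^2 * t j :=
    fun j => mul_nonneg (sq_nonneg _) (ht_nonneg j)
  have hV_le : V ≤ μ * E := sum_le_hasSum _ (fun j _ => hu_nonneg j) hU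
  have hA0 : 0 ≤ A := Finset.sum_nonneg fun j _ => ht_nonneg j
  have hV0 : 0 ≤ V := Finset.sum_nonneg fun j _ => hu_nonneg j
  -- Cauchy-Schwarz on a general finset
  have CS : ∀ s : Finset ℕ, (∑ j ∈ s, ((j : ℝ) - μ) * t j)^2 ≤
      (∑ j ∈ s, t j) * (∑ j ∈ s, ((j : ℝ) - μ)^2 * t j) := by
    intro s
    have cs := Finset.sum_mul_sq_le_sq_mul_sq s (fun j => Real.sqrt (t j))
      (fun j => ((j : ℝ) - μ) * Real.sqrt (t j))
    have e1 : ∑ j ∈ s, Real.sqrt (t j) * (((j : ℝ) - μ) * Real.sqrt (t j))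
        = ∑ j ∈ s, ((j : ℝ) - μ) * t j :=
      Finset.sum_congr rfl fun j _ => by
        rw [show Real.sqrt (t j) * (((j : ℝ) - μ) * Real.sqrt (t j))
              = ((j : ℝ) - μ) * (Real.sqrt (t j) * Real.sqrt (t j)) from by ring,
            Real.mul_self_sqrt (ht_nonneg j)]
    have e2 : ∑ j ∈ s, (Real.sqrt (t j))^2 = ∑ j ∈ s, t j :=
      Finset.sum_congr rfl fun j _ => Real.sq_sqrt (ht_nonneg j)
    have e3 : ∑ j ∈ s, (((j : ℝ) - μ) * Real.sqrt (t j))^2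
        = ∑ j ∈ s, ((j : ℝ) - μ)^2 * t j :=
      Finset.sum_congr rfl fun j _ => by
        rw [mul_pow, Real.sq_sqrt (ht_nonneg j)]
    rw [e1, e2, e3] at cs
    exact cs
  -- C1
  have C1 : (μ * t k)^2 ≤ A * V := by
    have := CS (range (k + 1))
    rw [hL1 k] at this
    calc (μ * t k)^2 = (-μ * t k)^2 := by ring
      _ ≤ A * V := this
  -- C2
  have C2 : ∀ N : ℕ, k ≤ N → (μ * (t k - t N))^2 ≤ (E - A) * (μ * E - V) := by
    intro N hN
    have hsub : range (k + 1) ⊆ range (N + 1) := Finset.range_subset_range.2 (by omega)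
    have cs := CS (range (N + 1) \ range (k + 1))
    have e1 : ∑ j ∈ range (N + 1) \ range (k + 1), ((j : ℝ) - μ) * t j
        = μ * (t k - t N) := by
      rw [Finset.sum_sdiff_eq_sub hsub, hL1 N, hL1 k]; ring
    have e2 : ∑ j ∈ range (N + 1) \ range (k + 1), t j
        = (∑ j ∈ range (N + 1), t j) - A := Finset.sum_sdiff_eq_sub hsub
    have e3 : ∑ j ∈ range (N + 1) \ range (k + 1), ((j : ℝ) - μ)^2 * t j
        = (∑ j ∈ range (N + 1), ((j : ℝ) - μ)^2 * t j) - V :=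
      Finset.sum_sdiff_eq_sub hsub
    rw [e1, e2, e3] at cs
    have hAN : (∑ j ∈ range (N + 1), t j) ≤ E :=
      sum_le_hasSum _ (fun j _ => ht_nonneg j) ht_hasSum
    have hWN : (∑ j ∈ range (N + 1), ((j : ℝ) - μ)^2 * t j) ≤ μ * E :=
      sum_le_hasSum _ (fun j _ => hu_nonneg j) hU
    have ht2 : 0 ≤ (∑ j ∈ range (N + 1), ((j : ℝ) - μ)^2 * t j) - V := by
      rw [← e3]; exact Finset.sum_nonneg fun j _ => hu_nonneg j
    have ht1 : 0 ≤ (∑ j ∈ range (N + 1), t j) - A := by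
      rw [← e2]; exact Finset.sum_nonneg fun j _ => ht_nonneg j
    calc (μ * (t k - t N))^2 ≤ _ := cs
      _ ≤ (E - A) * (μ * E - V) := by
          apply mul_le_mul (by linarith) (by linarith) ht2 (by linarith)
  -- take the limit N → ∞
  have h0 : Tendsto (fun N : ℕ => t N) atTop (nhds 0) := by
    simpa [ht_def] using FloorSemiring.tendsto_pow_div_factorial_atTop (K := ℝ) μ
  have hlim : Tendsto (fun N : ℕ => (μ * (t k - t N))^2) atTop
      (nhds ((μ * (t k - 0))^2)) := by
    exact (((tendsto_const_nhds.sub h0).const_mul μ).pow 2)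
  have key2 : (μ * t k)^2 ≤ (E - A) * (μ * E - V) := by
    have := le_of_tendsto hlim (eventually_atTop.2 ⟨k, C2⟩)
    simpa using this
  have hB0 : 0 ≤ E - A := by linarith
  -- case split
  have key : μ * (t k)^2 ≤ A * (E - A) := by
    rcases le_or_gt V (μ * (E - A)) with h | h
    · nlinarith [C1, mul_le_mul_of_nonneg_left h hA0, hμ, sq_nonneg (t k)]
    · have h' : μ * E - V < μ * A := by nlinarith
      nlinarith [key2, mul_le_mul_of_nonneg_left h'.le hB0, hμ, sq_nonneg (t k)]
  -- final algebra
  have h2 : Real.exp (-μ) * E = 1 := by rw [hE_def, ← Real.exp_add]; simp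
  have h1 : Real.exp (-2*μ) = Real.exp (-μ) * Real.exp (-μ) := by
    rw [← Real.exp_add]; ring_nf
  have htk : t k = μ ^ k / (Nat.factorial k : ℝ) := rfl
  have hkfac : (Nat.factorial k : ℝ) ≠ 0 := Nat.cast_ne_zero.2 (Nat.factorial_ne_zero k)
  have hAg : A = ∑ j ∈ Finset.range (k + 1), μ ^ j / (Nat.factorial j : ℝ) := rfl
  have lhs_eq : Real.exp (-2*μ) * μ ^ (2*k+1) / ((Nat.factorial k : ℝ))^2
      = (Real.exp (-μ) * Real.exp (-μ)) * (μ * (t k)^2) := by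
    rw [h1, htk]; field_simp; ring
  have rhs_eq : (Real.exp (-μ) * A) * (1 - Real.exp (-μ) * A)
      = (Real.exp (-μ) * Real.exp (-μ)) * (A * (E - A)) := by
    linear_combination (-(Real.exp (-μ) * A)) * h2
  rw [lhs_eq, rhs_eq]
  exact mul_le_mul_of_nonneg_left key (by positivity)
end
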